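/- Let θ ∈ (0,1] and a, b > 0 with a + b ≥ 1, and let X be a random variable with law PF(θ,a,b). Then the conditional law of X given X > 0 is PF(θ, a/(a+b), b/(a+b)). Equivalently, with f the pgf of PF(θ,a,b), the function h(s) = (f(s) − f(0))/(1 − f(0)) satisfies (1 − h(s))^{−θ} = (a·(1−s)^{−θ} + b)/(a + b) for all s ∈ [0,1). -/

import Mathlib

/-- conditioning on positivity. If `f` is the pgf of `PF(θ,a,b)` and
`h(s) = (f(s) - f(0))/(1 - f(0))` is the pgf of the conditional law given `X > 0`, then
`(1 - h(s))^(-θ) = (a (1-s)^(-θ) + b)/(a+b)`; i.e. the conditional law is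
`PF(θ, a/(a+b), b/(a+b))`. -/
theorem pf_conditional_law (θ a b : ℝ) (hθ : θ ∈ Set.Ioc (0:ℝ) 1)
    (ha : 0 < a) (hb : 0 < b) (hab : 1 ≤ a + b) (f h : ℝ → ℝ)
    (hf : ∀ s ∈ Set.Ico (0:ℝ) 1, f s = 1 - (a * (1 - s) ^ (-θ) + b) ^ (-1/θ))
    (hh : ∀ s ∈ Set.Ico (0:ℝ) 1, h s = (f s - f 0) / (1 - f 0)) :
    ∀ s ∈ Set.Ico (0:ℝ) 1,
      (1 - h s) ^ (-θ) = (a * (1 - s) ^ (-θ) + b) / (a + b) ∧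
      h s = 1 - (a / (a + b) * (1 - s) ^ (-θ) + b / (a + b)) ^ (-1/θ) := by
  obtain ⟨hθ0, hθ1⟩ := hθ
  intro s hs
  obtain ⟨hs0, hs1⟩ := hs
  have hab0 : (0:ℝ) < a + b := by linarith
  have h1s : (0:ℝ) < 1 - s := by linarith
  have hpow : (0:ℝ) < (1 - s) ^ (-θ) := Real.rpow_pos_of_pos h1s _
  set T := a * (1 - s) ^ (-θ) + b with hT
  have hT0 : 0 < T := by positivity
  have hf0 : f 0 = 1 - (a + b) ^ (-1/θ) := by
    have := hf 0 ⟨le_refl 0, by norm_num⟩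
    simpa [Real.rpow_neg] using this
  have hfs := hf s ⟨hs0, hs1⟩
  have h1f0 : 1 - f 0 = (a + b) ^ (-1/θ) := by rw [hf0]; ring
  have habp : (0:ℝ) < (a + b) ^ (-1/θ) := Real.rpow_pos_of_pos hab0 _
  have hhs : h s = 1 - T ^ (-1/θ) / (a + b) ^ (-1/θ) := by
    rw [hh s ⟨hs0, hs1⟩, h1f0, hfs, hf0]
    field_simp
    rw [hT]; ring
  have hdiv : T ^ (-1/θ) / (a + b) ^ (-1/θ) = (T / (a + b)) ^ (-1/θ) := by
    rw [Real.div_rpow hT0.le hab0.le]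
  have key : 1 - h s = (T / (a + b)) ^ (-1/θ) := by
    rw [hhs, hdiv]; ring
  have hTd : 0 < T / (a + b) := div_pos hT0 hab0
  constructor
  · rw [key, ← Real.rpow_mul hTd.le]
    have : (-1/θ) * (-θ) = 1 := by field_simp
    rw [this, Real.rpow_one]
  · rw [hhs, hdiv]
    congr 2
    field_simp
    exact hT
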